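/- Let n ≥ 2 and let H = (h_{ij}) be a real n×n unreduced lower Hessenberg matrix with associated polynomial sequence {q_i}_{0 ≤ i ≤ n}. If λ ∈ ℝ is a root of q_n, then λ is an eigenvalue of H and the nonzero vector v = (q_0(λ), q_1(λ), ..., q_{n−1}(λ))ᵀ satisfies H v = λ v. -/

import Mathlib

/-- The superdiagonal entry `h_{i+1, i+2}` (1-based) of `H`, with the convention
`h_{n, n+1} = 1`.  Here `i` is 0-based. -/
def superEntry {n : ℕ} (H : Matrix (Fin n) (Fin n) ℝ) (i : ℕ) : ℝ :=
  if h : i + 1 < n then H ⟨i, by omega⟩ ⟨i + 1, h⟩ else 1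

/-- The entry `h_{i+1, j+1}` (1-based) of `H`, with `0` outside the matrix.
Here `i, j` are 0-based. -/
def lowEntry {n : ℕ} (H : Matrix (Fin n) (Fin n) ℝ) (i j : ℕ) : ℝ :=
  if h : i < n ∧ j < n then H ⟨i, h.1⟩ ⟨j, h.2⟩ else 0

/-- `H` is an unreduced lower Hessenberg matrix: `h_{ij} = 0` for `j > i + 1`
(1-based), and all superdiagonal entries `h_{i,i+1}` are nonzero. -/
def IsUnreducedLowerHessenberg {n : ℕ} (H : Matrix (Fin n) (Fin n) ℝ) : Prop :=
  (∀ i j : Fin n, (i : ℕ) + 1 < (j : ℕ) → H i j = 0) ∧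
  (∀ i : ℕ, ∀ h : i + 1 < n, H ⟨i, by omega⟩ ⟨i + 1, h⟩ ≠ 0)

/-- The associated polynomial sequence of a matrix `H` (intended: unreduced lower
Hessenberg): `q 0 = 1` and
`q (i+1) = (1 / h_{i+1,i+2}) * (X * q i − ∑_{j=0}^{i} h_{i+1,j+1} * q j)`
(1-based entries), with the convention `h_{n,n+1} = 1`. -/
noncomputable def assocPoly {n : ℕ} (H : Matrix (Fin n) (Fin n) ℝ) : ℕ → Polynomial ℝ
  | 0 => 1
  | i + 1 =>
      Polynomial.C (superEntry H i)⁻¹ *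
        (Polynomial.X * assocPoly H i -
          ∑ j : Fin (i + 1), Polynomial.C (lowEntry H i j) * assocPoly H j)

lemma superEntry_ne_zero {n : ℕ} (H : Matrix (Fin n) (Fin n) ℝ)
    (hH : IsUnreducedLowerHessenberg H) (i : ℕ) : superEntry H i ≠ 0 := by
  unfold superEntry
  split
  · exact hH.2 i ‹_›
  · exact one_ne_zero

lemma assocPoly_rec {n : ℕ} (H : Matrix (Fin n) (Fin n) ℝ)
    (hH : IsUnreducedLowerHessenberg H) (lam : ℝ) (i : ℕ) :
    superEntry H i * (assocPoly H (i + 1)).eval lam =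
      lam * (assocPoly H i).eval lam -
        ∑ j ∈ Finset.range (i + 1), lowEntry H i j * (assocPoly H j).eval lam := by
  have hs := superEntry_ne_zero H hH i
  rw [assocPoly]
  simp only [Polynomial.eval_mul, Polynomial.eval_C, Polynomial.eval_sub, Polynomial.eval_X,
    Polynomial.eval_finset_sum]
  rw [← mul_assoc, mul_inv_cancel₀ hs, one_mul]
  congr 1
  exact Fin.sum_univ_eq_sum_range (fun j => lowEntry H i j * (assocPoly H j).eval lam) (i+1)

theorem assocPoly_root_eigenvector (n : ℕ) (hn : 2 ≤ n)
    (H : Matrix (Fin n) (Fin n) ℝ) (hH : IsUnreducedLowerHessenberg H)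
    (lam : ℝ) (hroot : (assocPoly H n).eval lam = 0) :
    (fun i : Fin n => (assocPoly H i).eval lam) ≠ 0 ∧
    H.mulVec (fun i : Fin n => (assocPoly H i).eval lam) =
      lam • (fun i : Fin n => (assocPoly H i).eval lam) := by
  set v : ℕ → ℝ := fun k => (assocPoly H k).eval lam with hv
  constructor
  · intro h
    have h0 := congrFun h ⟨0, by omega⟩
    simp [assocPoly] at h0
  · funext i
    show ∑ j : Fin n, H i j * v j = lam * v i
    have hfin : ∀ j : Fin n, H i j * v j = lowEntry H (i : ℕ) (j : ℕ) * v (j : ℕ) := by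
      intro j
      simp [lowEntry, i.isLt, j.isLt]
    rw [Finset.sum_congr rfl (fun j _ => hfin j),
      Fin.sum_univ_eq_sum_range (fun j => lowEntry H (i : ℕ) j * v j) n]
    rw [show (Finset.range n) = Finset.Ico 0 n from Finset.range_eq_Ico n,
      ← Finset.sum_Ico_consecutive _ (Nat.zero_le ((i : ℕ) + 1)) i.isLt,
      show Finset.Ico 0 ((i:ℕ)+1) = Finset.range ((i:ℕ)+1) from (Finset.range_eq_Ico _).symm]
    have hrec := assocPoly_rec H hH lam i
    have htail : ∑ j ∈ Finset.Ico ((i : ℕ) + 1) n, lowEntry H (i : ℕ) j * v j =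
        superEntry H (i : ℕ) * v ((i : ℕ) + 1) := by
      by_cases hlt : (i : ℕ) + 1 < n
      · rw [Finset.sum_eq_single_of_mem ((i : ℕ) + 1)
          (Finset.mem_Ico.mpr ⟨le_refl _, hlt⟩)]
        · congr 1
          simp [lowEntry, superEntry, hlt, i.isLt]
        · intro j hj hne
          have hj' := Finset.mem_Ico.mp hj
          have : lowEntry H (i : ℕ) j = 0 := by
            have hij : (i : ℕ) + 1 < j := by omega
            simp only [lowEntry, dif_pos (⟨i.isLt, hj'.2⟩ : (i : ℕ) < n ∧ j < n)]
            exact hH.1 i ⟨j, hj'.2⟩ hij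
          rw [this, zero_mul]
      · have hn' : (i : ℕ) + 1 = n := by have := i.isLt; omega
        have hsup : superEntry H (i : ℕ) = 1 := by simp [superEntry, hlt]
        rw [hn', Finset.Ico_self, Finset.sum_empty, hsup, one_mul]
        exact hroot.symm
    rw [htail]
    linarith [hrec]
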